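/- For every d ≥ 1 and every vertex v of the d-dimensional hypercube Q^d, the configuration that places 3^d − 2d pebbles on v, one pebble on each of the d neighbors of v, and no pebbles elsewhere, is coverable. -/

import Mathlib

open Finset

/-- A pebbling step on graph `G`: remove two pebbles from a vertex `u`,
place one pebble on an adjacent vertex `v`. -/
def PebbleStep {V : Type*} (G : SimpleGraph V) (C C' : V → ℕ) : Prop :=
  ∃ u v : V, G.Adj u v ∧ 2 ≤ C u ∧ C' u = C u - 2 ∧ C' v = C v + 1 ∧
    ∀ x : V, x ≠ u → x ≠ v → C' x = C x

/-- A configuration is coverable if after some sequence of pebbling steps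
every vertex has at least one pebble. -/
def Coverable {V : Type*} (G : SimpleGraph V) (C : V → ℕ) : Prop :=
  ∃ C' : V → ℕ, Relation.ReflTransGen (PebbleStep G) C C' ∧ ∀ v : V, 1 ≤ C' v

/-- The `d`-dimensional hypercube: vertices are binary `d`-tuples, adjacent
exactly when they differ in one coordinate. -/
def cube (d : ℕ) : SimpleGraph (Fin d → Bool) where
  Adj x y := hammingDist x y = 1
  symm := ⟨fun x y h => by simpa [hammingDist_comm] using h⟩
  loopless := ⟨fun x h => by simp [hammingDist_self] at h⟩

instance (d : ℕ) : DecidableRel (cube d).Adj :=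
  fun x y => inferInstanceAs (Decidable (hammingDist x y = 1))

lemma pump {V : Type*} [DecidableEq V] {G : SimpleGraph V} {w x : V} (h : G.Adj w x) :
    ∀ (n : ℕ) (C : V → ℕ), 2 * n ≤ C w →
      Relation.ReflTransGen (PebbleStep G) C
        (fun y => if y = w then C w - 2 * n else if y = x then C x + n else C y) := by
  have hwx : w ≠ x := G.ne_of_adj h
  intro n
  induction n with
  | zero =>
    intro C _
    have : (fun y => if y = w then C w - 2 * 0 else if y = x then C x + 0 else C y) = C := by
      funext y
      by_cases hy : y = w
      · subst hy; simp
      · by_cases hy' : y = x <;> simp [hy, hy', Ne.symm hwx]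
    rw [this]
  | succ n ih =>
    intro C hC
    set C₁ : V → ℕ := fun y => if y = w then C w - 2 else if y = x then C x + 1 else C y with hC₁
    have hstep : PebbleStep G C C₁ := by
      refine ⟨w, x, h, by omega, ?_, ?_, ?_⟩
      · simp [hC₁]
      · simp [hC₁, (Ne.symm hwx)]
      · intro z hz hz'; simp [hC₁, hz, hz']
    have h2 : 2 * n ≤ C₁ w := by simp [hC₁]; omega
    have := ih C₁ h2
    have heq : (fun y => if y = w then C₁ w - 2 * n else if y = x then C₁ x + n else C₁ y)
        = (fun y => if y = w then C w - 2 * (n+1) else if y = x then C x + (n+1) else C y) := by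
      funext y
      by_cases hy : y = w
      · subst hy; simp [hC₁]; omega
      · by_cases hy' : y = x
        · subst hy'; simp [hC₁, hy]; omega
        · simp [hC₁, hy, hy']
    rw [heq] at this
    exact Relation.ReflTransGen.head hstep this

lemma transfer {V : Type*} [DecidableEq V] {G : SimpleGraph V} {w u : V} (p : G.Walk w u) :
    ∀ (C : V → ℕ), 2 ^ p.length ≤ C w →
      ∃ C', Relation.ReflTransGen (PebbleStep G) C C' ∧ 1 ≤ C' u ∧
        C w - 2 ^ p.length ≤ C' w ∧ ∀ y, y ≠ w → C y ≤ C' y := by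
  induction p with
  | nil =>
    intro C hC
    exact ⟨C, Relation.ReflTransGen.refl, by simpa using hC, Nat.sub_le _ _ , fun y _ => le_refl _⟩
  | @cons w b u h q ih =>
    intro C hC
    have hwb : w ≠ b := G.ne_of_adj h
    have hlen : (SimpleGraph.Walk.cons h q).length = q.length + 1 := rfl
    rw [hlen] at hC
    have hC' : 2 * 2 ^ q.length ≤ C w := by rw [pow_succ] at hC; omega
    have hpump := pump h (2 ^ q.length) C hC'
    set C₁ : V → ℕ := fun y => if y = w then C w - 2 * 2 ^ q.length else if y = b then C b + 2 ^ q.length else C y with hC₁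
    have hC₁b : 2 ^ q.length ≤ C₁ b := by simp [hC₁, Ne.symm hwb]
    obtain ⟨C₂, hrtg, hu, hb, hrest⟩ := ih C₁ hC₁b
    refine ⟨C₂, hpump.trans hrtg, hu, ?_, ?_⟩
    · have := hrest w hwb
      simp only [hC₁, if_pos rfl] at this
      rw [hlen, pow_succ]
      omega
    · intro y hy
      by_cases hyb : y = b
      · have h2 : C₁ b - 2 ^ q.length ≤ C₂ b := hb
        simp [hC₁, Ne.symm hwb] at h2
        rw [hyb]
        omega
      · have := hrest y hyb
        simpa only [hC₁, if_neg hy, if_neg hyb] using this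

lemma cover_set {V : Type*} [DecidableEq V] {G : SimpleGraph V} {v : V} (ℓ : V → ℕ)
    (hwalk : ∀ u, ∃ p : G.Walk v u, p.length = ℓ u) (S : Finset V) :
    ∀ (C : V → ℕ), v ∉ S → (∑ u ∈ S, 2 ^ ℓ u) ≤ C v →
      ∃ C', Relation.ReflTransGen (PebbleStep G) C C' ∧ (∀ u ∈ S, 1 ≤ C' u) ∧
        C v - (∑ u ∈ S, 2 ^ ℓ u) ≤ C' v ∧ ∀ y, y ≠ v → C y ≤ C' y := by
  induction S using Finset.induction with
  | empty =>
    intro C _ _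
    exact ⟨C, Relation.ReflTransGen.refl, by simp, by simp, fun y _ => le_refl _⟩
  | @insert a S ha ih =>
    intro C hv hsum
    rw [Finset.sum_insert ha] at hsum
    have hav : a ≠ v := fun h => hv (h ▸ Finset.mem_insert_self a S)
    obtain ⟨p, hp⟩ := hwalk a
    obtain ⟨C₁, hr1, ha1, hv1, hrest1⟩ := transfer p C (by rw [hp]; omega)
    rw [hp] at hv1
    have hvS : v ∉ S := fun h => hv (Finset.mem_insert_of_mem h)
    obtain ⟨C₂, hr2, hS2, hv2, hrest2⟩ := ih C₁ hvS (by omega)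
    refine ⟨C₂, hr1.trans hr2, ?_, ?_, ?_⟩
    · intro u hu
      rcases Finset.mem_insert.mp hu with rfl | hu
      · exact le_trans ha1 (hrest2 u hav)
      · exact hS2 u hu
    · rw [Finset.sum_insert ha]
      omega
    · intro y hy
      exact le_trans (hrest1 y hy) (hrest2 y hy)

lemma hd_update {d : ℕ} (u : Fin d → Bool) (i : Fin d) (b : Bool) (hb : b ≠ u i) :
    hammingDist u (Function.update u i b) = 1 := by
  rw [hammingDist]
  rw [Finset.card_eq_one]
  refine ⟨i, ?_⟩
  ext j
  simp only [Finset.mem_filter, Finset.mem_univ, true_and, Finset.mem_singleton]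
  constructor
  · intro hj
    by_contra hji
    exact hj (by rw [Function.update_of_ne hji])
  · rintro rfl
    simp [Ne.symm hb]

lemma cube_walk {d : ℕ} (v : Fin d → Bool) (u : Fin d → Bool) :
    ∃ p : (cube d).Walk v u, p.length = hammingDist v u := by
  generalize hn : hammingDist v u = n
  induction n generalizing u with
  | zero =>
    obtain rfl := eq_of_hammingDist_eq_zero hn
    exact ⟨SimpleGraph.Walk.nil, rfl⟩
  | succ n ih =>
    have hne : (Finset.univ.filter fun i => v i ≠ u i).Nonempty := by
      rw [← Finset.card_pos, ← hammingDist, hn]; omega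
    obtain ⟨i, hi⟩ := hne
    simp only [Finset.mem_filter, Finset.mem_univ, true_and] at hi
    set u' := Function.update u i (v i) with hu'
    have hadj : (cube d).Adj u' u := by
      show hammingDist u' u = 1
      rw [hammingDist_comm]
      exact hd_update u i (v i) hi
    have hdu' : hammingDist v u' = n := by
      have : (Finset.univ.filter fun j => v j ≠ u' j) =
          (Finset.univ.filter fun j => v j ≠ u j) \ {i} := by
        ext j
        by_cases hj : j = i
        · subst hj; simp [hu', Function.update_self]
        · simp [hu', Function.update_of_ne hj, hj]
      have hcard : (Finset.univ.filter fun j => v j ≠ u' j).card = n := by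
        rw [this, Finset.card_sdiff_of_subset (by simpa using hi)]
        rw [← hammingDist] at *
        rw [hn]
        simp
      rw [hammingDist, hcard]
    obtain ⟨p, hp⟩ := ih u' hdu'
    exact ⟨p.concat hadj, by simp [hp]⟩

lemma pow_hd_eq_prod {d : ℕ} (v u : Fin d → Bool) :
    2 ^ hammingDist v u = ∏ i, (if v i ≠ u i then 2 else 1) := by
  rw [hammingDist, ← Finset.prod_filter (fun i => v i ≠ u i) (fun _ => 2)]
  rw [Finset.prod_const]

lemma sum_pow_hd {d : ℕ} (v : Fin d → Bool) :
    ∑ u : Fin d → Bool, 2 ^ hammingDist v u = 3 ^ d := by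
  have key : ∏ i : Fin d, ∑ b : Bool, (if v i ≠ b then 2 else 1) =
      ∑ u : Fin d → Bool, ∏ i, (if v i ≠ u i then 2 else 1) :=
    Fintype.prod_sum (fun i b => if v i ≠ b then 2 else 1)
  have h3 : ∏ i : Fin d, ∑ b : Bool, (if v i ≠ b then 2 else 1) = 3 ^ d := by
    rw [Finset.prod_congr rfl (fun i _ => ?_), Finset.prod_const, Finset.card_univ,
      Fintype.card_fin]
    cases h : v i <;> simp
  rw [Finset.sum_congr rfl (fun u _ => pow_hd_eq_prod v u), ← key, h3]

lemma neighbors_eq {d : ℕ} (v : Fin d → Bool) :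
    Finset.univ.filter (fun u => hammingDist v u = 1) =
      Finset.univ.image (fun i => Function.update v i (!(v i))) := by
  ext u
  simp only [Finset.mem_filter, Finset.mem_univ, true_and, Finset.mem_image]
  constructor
  · intro hu
    obtain ⟨i, hi⟩ := Finset.card_eq_one.mp hu
    have hmem : ∀ j, (v j ≠ u j) ↔ j = i := by
      intro j
      constructor
      · intro hj
        have : j ∈ ({i} : Finset (Fin d)) := hi ▸ (by simp [hj])
        simpa using this
      · rintro rfl
        have : j ∈ Finset.univ.filter (fun k => v k ≠ u k) := hi ▸ Finset.mem_singleton_self j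
        simpa using this
    refine ⟨i, ?_⟩
    funext j
    by_cases hj : j = i
    · subst hj
      rw [Function.update_self]
      have := (hmem j).mpr rfl
      cases hv : v j <;> cases hu' : u j <;> simp_all
    · rw [Function.update_of_ne hj]
      by_contra hne
      exact hj ((hmem j).mp hne)
  · rintro ⟨i, rfl⟩
    exact hd_update v i (!(v i)) (by cases v i <;> simp)

lemma card_neighbors {d : ℕ} (v : Fin d → Bool) :
    (Finset.univ.filter (fun u => hammingDist v u = 1)).card = d := by
  rw [neighbors_eq, Finset.card_image_of_injective _ ?_, Finset.card_univ, Fintype.card_fin]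
  intro i j hij
  by_contra hne
  have := congrFun hij i
  simp only [Function.update_self, Function.update_of_ne (Ne.symm hne)] at this
  cases v i <;> simp_all

/-- For every `d ≥ 1` and every vertex `v` of `Q^d`, the configuration placing
`3^d − 2d` pebbles on `v`, one pebble on each of the `d` neighbors of `v`, and
none elsewhere, is coverable. -/
theorem base_case_coverable (d : ℕ) (hd : 1 ≤ d) (v : Fin d → Bool) :
    Coverable (cube d)
      (fun x => if x = v then 3 ^ d - 2 * d else if (cube d).Adj v x then 1 else 0) := by
  classical
  set C₀ : (Fin d → Bool) → ℕ :=
    fun x => if x = v then 3 ^ d - 2 * d else if (cube d).Adj v x then 1 else 0 with hC₀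
  set N : Finset (Fin d → Bool) := Finset.univ.filter (fun u => (cube d).Adj v u) with hN
  set S : Finset (Fin d → Bool) :=
    Finset.univ.filter (fun u => ¬(u = v ∨ (cube d).Adj v u)) with hS
  have hvN : v ∉ N := by simp [hN, (cube d).loopless.irrefl v]
  have hNcard : N.card = d := by
    rw [hN]
    exact card_neighbors v
  have hsumN : ∑ u ∈ N, 2 ^ hammingDist v u = 2 * d := by
    have heq : ∀ u ∈ N, 2 ^ hammingDist v u = 2 := by
      intro u hu
      have hadj : (cube d).Adj v u := by
        rw [hN] at hu
        exact (Finset.mem_filter.mp hu).2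
      rw [show hammingDist v u = 1 from hadj, pow_one]
    rw [Finset.sum_congr rfl heq, Finset.sum_const, hNcard, smul_eq_mul]
    ring
  have hfilter : Finset.univ.filter (fun u => u = v ∨ (cube d).Adj v u) = insert v N := by
    ext u
    simp [hN, Finset.mem_insert]
  have hsplit : (∑ u ∈ S, 2 ^ hammingDist v u) + (1 + 2 * d) = 3 ^ d := by
    have h0 := Finset.sum_filter_add_sum_filter_not Finset.univ
      (fun u => u = v ∨ (cube d).Adj v u) (fun u => 2 ^ hammingDist v u)
    rw [hfilter, Finset.sum_insert hvN, hsumN, hammingDist_self, sum_pow_hd] at h0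
    rw [hS]
    omega
  have hvS : v ∉ S := by simp [hS]
  have hC₀v : C₀ v = 3 ^ d - 2 * d := by simp [hC₀]
  have hT : (∑ u ∈ S, 2 ^ hammingDist v u) ≤ C₀ v := by
    rw [hC₀v]; omega
  obtain ⟨C', hrtg, hSone, hv', hrest⟩ :=
    cover_set (fun u => hammingDist v u) (cube_walk v) S C₀ hvS hT
  refine ⟨C', hrtg, ?_⟩
  intro u
  by_cases hu : u = v
  · subst hu
    rw [hC₀v] at hv'
    omega
  · by_cases hadj : (cube d).Adj v u
    · have : C₀ u = 1 := by simp [hC₀, hu, hadj]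
      have := hrest u hu
      omega
    · exact hSone u (by simp [hS, hu, hadj])
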